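/- Let n ≥ 2 and λ, λ₀₀ > 0. With ṽ defined by the complete-graph recursion (ṽ_n = λ₀₀/λ and ṽ_j = (λ₀₀ + (j(n−j)λ/(n−1))·ṽ_{j+1}) / (jλ/n + j(n−j)λ/(n−1)) for 1 ≤ j ≤ n−1), the value ṽ_1 satisfies ṽ_1 ≥ (λ₀₀/λ)·[ ((n−1)/n)·∑_{k=1}^{n−1} 1/k + 1/n ]. -/

import Mathlib

set_option maxHeartbeats 1000000

/-- For the complete-graph recursion,
ṽ₁ ≥ (λ₀₀/λ)·[((n−1)/n)·∑_{k=1}^{n−1} 1/k + 1/n]. -/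
theorem complete_graph_age_lower_bound
    (n : ℕ) (hn : 2 ≤ n) (lam lam00 : ℝ) (hlam : 0 < lam) (hlam00 : 0 < lam00)
    (v : ℕ → ℝ) (hvn : v n = lam00 / lam)
    (hrec : ∀ j : ℕ, 1 ≤ j → j ≤ n - 1 →
      v j = (lam00 + ((j : ℝ) * ((n : ℝ) - j) * lam / ((n : ℝ) - 1)) * v (j + 1)) /
            ((j : ℝ) * lam / n + (j : ℝ) * ((n : ℝ) - j) * lam / ((n : ℝ) - 1))) :
    v 1 ≥ (lam00 / lam) *
      (((n : ℝ) - 1) / n * ∑ k ∈ Finset.Icc 1 (n - 1), (1 : ℝ) / k + 1 / n) := by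
  set N : ℝ := (n : ℝ) with hN
  have hN2 : (2 : ℝ) ≤ N := by rw [hN]; exact_mod_cast hn
  set c : ℝ := lam00 / lam with hc
  have hcpos : 0 < c := div_pos hlam00 hlam
  set G : ℕ → ℝ := fun j =>
    (1 + (N - 1) * ∑ k ∈ Finset.Icc j (n - 1), (1 : ℝ) / k) / (N - j + 1) with hG
  have key : ∀ m : ℕ, m ≤ n - 1 → c * G (n - m) ≤ v (n - m) := by
    intro m
    induction m with
    | zero =>
      intro _
      simp only [Nat.sub_zero, hG]
      have hempty : Finset.Icc n (n - 1) = ∅ := by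
        rw [Finset.Icc_eq_empty_iff]; omega
      rw [hempty]
      simp [hvn, hc, hN]
    | succ m ih =>
      intro hm
      have hmn : m ≤ n - 1 := Nat.le_of_succ_le hm
      have ihv := ih hmn
      set j : ℕ := n - (m + 1) with hj
      have hj1 : 1 ≤ j := by omega
      have hjn1 : j ≤ n - 1 := by omega
      have hjsucc : j + 1 = n - m := by omega
      have hrecj := hrec j hj1 hjn1
      rw [hjsucc] at hrecj
      set J : ℝ := (j : ℝ) with hJ
      have hJ1 : (1 : ℝ) ≤ J := by rw [hJ]; exact_mod_cast hj1
      have hJle : J ≤ N - 1 := by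
        have hle : j + 1 ≤ n := by omega
        have : J + 1 ≤ N := by rw [hJ, hN]; exact_mod_cast hle
        linarith
      have hNJ : (1 : ℝ) ≤ N - J := by linarith
      have hJpos : (0 : ℝ) < J := by linarith
      have hN1 : (0 : ℝ) < N - 1 := by linarith
      have hNpos : (0 : ℝ) < N := by linarith
      have hNJ1 : (0 : ℝ) < N - J + 1 := by linarith
      set H : ℝ := ∑ k ∈ Finset.Icc (j + 1) (n - 1), (1 : ℝ) / k with hH
      have hHnn : 0 ≤ H := by
        rw [hH]
        apply Finset.sum_nonneg
        intro k _
        positivity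
      have hsum : ∑ k ∈ Finset.Icc j (n - 1), (1 : ℝ) / k = 1 / J + H := by
        rw [Finset.Icc_eq_cons_Ioc hjn1, Finset.sum_cons, hH, Finset.Icc_add_one_left_eq_Ioc]
      have hGj : G j = (1 + (N - 1) * (1 / J + H)) / (N - J + 1) := by
        simp only [hG, hsum]; rfl
      have hGj1 : G (j + 1) = (1 + (N - 1) * H) / (N - J + 1 - 1) := by
        simp only [hG]
        rw [← hH]
        have hcast : ((j + 1 : ℕ) : ℝ) = J + 1 := by rw [hJ]; push_cast; ring
        rw [hcast]
        ring_nf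
      have hGsucc : c * G (j + 1) ≤ v (n - m) := by
        rw [hjsucc]; exact ihv
      have hD : 0 < J * lam / N + J * (N - J) * lam / (N - 1) := by positivity
      have hA : 0 ≤ J * (N - J) * lam / (N - 1) := by positivity
      rw [hrecj, le_div_iff₀ hD]
      have hQ : 0 ≤ (N - 1) + J + J * (N - 1) * H := by
        have := mul_nonneg (mul_nonneg hJpos.le hN1.le) hHnn
        linarith
      have hfac : lam00 + (J * (N - J) * lam / (N - 1)) *
            (c * ((1 + (N - 1) * H) / (N - J + 1 - 1)))
          - c * ((1 + (N - 1) * (1 / J + H)) / (N - J + 1)) *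
            (J * lam / N + J * (N - J) * lam / (N - 1))
          = lam00 * ((N - 1) + J + J * (N - 1) * H)
            / (N * (N - 1) * (N - J + 1)) := by
        have h1 : N - J + 1 - 1 ≠ 0 := by linarith
        have h2 : (N - 1) ≠ 0 := ne_of_gt hN1
        have h3 : J ≠ 0 := ne_of_gt hJpos
        have h4 : N ≠ 0 := ne_of_gt hNpos
        have h5 : N - J + 1 ≠ 0 := ne_of_gt hNJ1
        have h6 : lam ≠ 0 := ne_of_gt hlam
        rw [hc]
        field_simp
        ring
      have hnonneg : 0 ≤ lam00 * ((N - 1) + J + J * (N - 1) * H)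
            / (N * (N - 1) * (N - J + 1)) := by
        apply div_nonneg
        · exact mul_nonneg (le_of_lt hlam00) hQ
        · positivity
      have hmid : c * ((1 + (N - 1) * (1 / J + H)) / (N - J + 1)) *
            (J * lam / N + J * (N - J) * lam / (N - 1))
          ≤ lam00 + (J * (N - J) * lam / (N - 1)) *
            (c * ((1 + (N - 1) * H) / (N - J + 1 - 1))) := by linarith
      calc c * G j * (J * lam / N + J * (N - J) * lam / (N - 1))
          ≤ lam00 + (J * (N - J) * lam / (N - 1)) * (c * G (j + 1)) := by
            rw [hGj, hGj1]; exact hmid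
        _ ≤ lam00 + J * (N - J) * lam / (N - 1) * v (n - m) := by
            have := mul_le_mul_of_nonneg_left hGsucc hA
            linarith
  have h1 := key (n - 1) (le_refl _)
  have hn1 : n - (n - 1) = 1 := by omega
  rw [hn1] at h1
  have hG1 : G 1 = (1 + (N - 1) * ∑ k ∈ Finset.Icc 1 (n - 1), (1 : ℝ) / k) / N := by
    simp only [hG]; norm_num
  rw [hG1] at h1
  have hNne : N ≠ 0 := by linarith
  calc (lam00 / lam) * ((N - 1) / N * ∑ k ∈ Finset.Icc 1 (n - 1), (1 : ℝ) / k + 1 / N)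
      = c * ((1 + (N - 1) * ∑ k ∈ Finset.Icc 1 (n - 1), (1 : ℝ) / k) / N) := by
        rw [hc]; ring
    _ ≤ v 1 := h1
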